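/- Let F = 𝒫(𝔾) for a nonempty subset 𝔾 ⊆ G(p,V). Then F equals the closure of its interior: F = cl(Int F). -/

import Mathlib

open Module RealInnerProductSpace Topology Filter

noncomputable section

variable {V : Type*} [NormedAddCommGroup V] [InnerProductSpace ℝ V] [FiniteDimensional ℝ V]

/-- Orthogonal projection onto the subspace `W`, as an endomorphism of `V`. -/
def projCLM (W : Submodule ℝ V) : V →L[ℝ] V :=
  W.subtypeL.comp (W.orthogonalProjection)

/-- `tr_W A = tr (P_W ∘ A)`, the trace of the restriction of `A` to `W`. -/
def trW (W : Submodule ℝ V) (A : V →L[ℝ] V) : ℝ :=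
  LinearMap.trace ℝ V (((projCLM W).comp A : V →L[ℝ] V) : V →ₗ[ℝ] V)

/-- The subequation `𝒫(𝔾) ⊆ Sym²(V)`: self-adjoint endomorphisms `A` with
`tr_W A ≥ 0` for all `W ∈ 𝔾`. -/
def PG (𝔾 : Set (Submodule ℝ V)) : Set (selfAdjoint (V →L[ℝ] V)) :=
  {A | ∀ W ∈ 𝔾, 0 ≤ trW W (A : V →L[ℝ] V)}

/-- The positive semidefinite cone `𝒫 ⊆ Sym²(V)`. -/
def posSA : Set (selfAdjoint (V →L[ℝ] V)) :=
  {A | ContinuousLinearMap.IsPositive (A : V →L[ℝ] V)}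

/-- The identity `I` as an element of `Sym²(V)`. -/
def idSA : selfAdjoint (V →L[ℝ] V) := ⟨1, IsSelfAdjoint.one _⟩

lemma trace_eq_sum_inner' {E : Type*} [NormedAddCommGroup E] [InnerProductSpace ℝ E]
    [FiniteDimensional ℝ E] {ι : Type*} [Fintype ι] [DecidableEq ι]
    (b : OrthonormalBasis ι ℝ E) (f : E →ₗ[ℝ] E) :
    LinearMap.trace ℝ E f = ∑ i, ⟪b i, f (b i)⟫ := by
  rw [LinearMap.trace_eq_matrix_trace ℝ b.toBasis]
  simp [Matrix.trace, LinearMap.toMatrix_apply, OrthonormalBasis.coe_toBasis_repr_apply,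
    OrthonormalBasis.repr_apply_apply, Matrix.diag]

lemma trW_eq_sum (W : Submodule ℝ V) (B : V →L[ℝ] V) :
    trW W B = ∑ i : Fin (finrank ℝ W),
      ⟪((stdOrthonormalBasis ℝ W) i : V), B ((stdOrthonormalBasis ℝ W) i : V)⟫ := by
  classical
  have h1 : (((projCLM W).comp B : V →L[ℝ] V) : V →ₗ[ℝ] V)
      = W.subtype ∘ₗ ((W.orthogonalProjection : V →ₗ[ℝ] W) ∘ₗ (B : V →ₗ[ℝ] V)) := rfl
  rw [trW, h1, LinearMap.trace_comp_comm',
    trace_eq_sum_inner' (stdOrthonormalBasis ℝ W)]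
  congr 1
  ext i
  set e := (stdOrthonormalBasis ℝ W) i
  have : ((W.orthogonalProjection : V →ₗ[ℝ] W) ∘ₗ (B : V →ₗ[ℝ] V)) (W.subtype e)
      = W.orthogonalProjection (B e) := rfl
  rw [LinearMap.comp_apply, this, Submodule.inner_orthogonalProjectionOnto_eq_of_mem_left]

lemma trW_one (W : Submodule ℝ V) : trW W (1 : V →L[ℝ] V) = finrank ℝ W := by
  rw [trW_eq_sum]
  have : ∀ i : Fin (finrank ℝ W),
      ⟪((stdOrthonormalBasis ℝ W) i : V), (1 : V →L[ℝ] V) ((stdOrthonormalBasis ℝ W) i : V)⟫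
        = 1 := by
    intro i
    simp only [ContinuousLinearMap.one_apply]
    rw [real_inner_self_eq_norm_sq]
    have h := (stdOrthonormalBasis ℝ W).orthonormal.1 i
    rw [Submodule.norm_coe, h]; norm_num
  simp only [ContinuousLinearMap.one_apply] at this
  simp only [ContinuousLinearMap.one_apply, this]; simp

lemma trW_add (W : Submodule ℝ V) (A B : V →L[ℝ] V) :
    trW W (A + B) = trW W A + trW W B := by
  simp [trW_eq_sum, inner_add_right, Finset.sum_add_distrib]

lemma abs_trW_le (W : Submodule ℝ V) (B : V →L[ℝ] V) :
    |trW W B| ≤ (finrank ℝ W : ℝ) * ‖B‖ := by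
  rw [trW_eq_sum]
  calc |∑ i : Fin (finrank ℝ W),
      ⟪((stdOrthonormalBasis ℝ W) i : V), B ((stdOrthonormalBasis ℝ W) i : V)⟫|
      ≤ ∑ i : Fin (finrank ℝ W),
        |⟪((stdOrthonormalBasis ℝ W) i : V), B ((stdOrthonormalBasis ℝ W) i : V)⟫| :=
        Finset.abs_sum_le_sum_abs _ _
    _ ≤ ∑ _i : Fin (finrank ℝ W), ‖B‖ := by
        apply Finset.sum_le_sum
        intro i _
        have hnorm : ‖((stdOrthonormalBasis ℝ W) i : V)‖ = 1 := by
          have h := (stdOrthonormalBasis ℝ W).orthonormal.1 i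
          rw [Submodule.norm_coe, h]
        have h1 : |⟪((stdOrthonormalBasis ℝ W) i : V), B ((stdOrthonormalBasis ℝ W) i : V)⟫|
            ≤ ‖((stdOrthonormalBasis ℝ W) i : V)‖ * ‖B ((stdOrthonormalBasis ℝ W) i : V)‖ :=
          abs_real_inner_le_norm _ _
        have h2 := B.le_opNorm ((stdOrthonormalBasis ℝ W) i : V)
        rw [hnorm, one_mul] at h1
        rw [hnorm, mul_one] at h2
        exact h1.trans h2
    _ = (finrank ℝ W : ℝ) * ‖B‖ := by simp

lemma trW_continuous (W : Submodule ℝ V) : Continuous (fun A : V →L[ℝ] V => trW W A) := by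
  simp only [trW_eq_sum]
  exact continuous_finset_sum _ fun i _ =>
    (continuous_inner.comp (by continuity : Continuous fun A : V →L[ℝ] V =>
      ((((stdOrthonormalBasis ℝ W) i : V), A ((stdOrthonormalBasis ℝ W) i : V))
        : V × V)))

lemma PG_closed (𝔾 : Set (Submodule ℝ V)) : IsClosed (PG 𝔾 : Set (selfAdjoint (V →L[ℝ] V))) := by
  have : (PG 𝔾 : Set (selfAdjoint (V →L[ℝ] V)))
      = ⋂ W ∈ 𝔾, {A : selfAdjoint (V →L[ℝ] V) | 0 ≤ trW W (A : V →L[ℝ] V)} := by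
    ext A; simp [PG]
  rw [this]
  refine isClosed_biInter fun W _ => ?_
  exact isClosed_le continuous_const ((trW_continuous W).comp continuous_subtype_val)

lemma trW_smul (W : Submodule ℝ V) (t : ℝ) (B : V →L[ℝ] V) :
    trW W (t • B) = t * trW W B := by
  simp [trW_eq_sum, inner_smul_right, Finset.mul_sum]


set_option maxHeartbeats 1000000 in
/-- `F = cl(Int F)` for `F = 𝒫(𝔾)`. -/
theorem statement4 (p : ℕ) (𝔾 : Set (Submodule ℝ V)) (h𝔾 : 𝔾.Nonempty)
    (hGr : ∀ W ∈ 𝔾, finrank ℝ W = p) :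
    PG 𝔾 = closure (interior (PG 𝔾)) := by
  rcases Nat.eq_zero_or_pos p with hp | hp
  · have huniv : PG 𝔾 = Set.univ := by
      apply Set.eq_univ_of_forall
      intro A W hW
      have h0 : finrank ℝ W = 0 := (hGr W hW).trans hp
      rw [trW_eq_sum]
      apply le_of_eq
      symm
      apply Finset.sum_eq_zero
      intro i _
      exact absurd i.isLt (by simp [h0])
    rw [huniv, interior_univ, closure_univ]
  · apply Set.Subset.antisymm
    · -- PG ⊆ closure (interior PG)
      intro A hA
      have hsm : ∀ t : ℝ, IsSelfAdjoint ((A : V →L[ℝ] V) + t • (1 : V →L[ℝ] V)) := by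
        intro t
        rw [IsSelfAdjoint, star_add, star_smul, star_one, A.2.star_eq]
        norm_num
      set f : ℝ → selfAdjoint (V →L[ℝ] V) :=
        fun t => ⟨(A : V →L[ℝ] V) + t • (1 : V →L[ℝ] V), hsm t⟩ with hf
      have hcont : Continuous f := by
        apply Continuous.subtype_mk
        fun_prop
      have hf0 : f 0 = A := by
        apply Subtype.ext
        simp [f]
      have hmem : ∀ t : ℝ, 0 < t → f t ∈ interior (PG 𝔾) := by
        intro t ht
        rw [mem_interior]
        refine ⟨(Subtype.val) ⁻¹' (Metric.ball ((A : V →L[ℝ] V) + t • 1) t), ?_, ?_, ?_⟩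
        · intro C hC W hW
          have hd : ‖(C : V →L[ℝ] V) - ((A : V →L[ℝ] V) + t • 1)‖ < t := by
            have := hC
            rwa [Set.mem_preimage, Metric.mem_ball, dist_eq_norm] at this
          set D : V →L[ℝ] V := (C : V →L[ℝ] V) - ((A : V →L[ℝ] V) + t • 1) with hD
          have hCeq : (C : V →L[ℝ] V) = (A : V →L[ℝ] V) + t • 1 + D := by
            rw [hD]; abel
          have habs : |trW W D| ≤ (p : ℝ) * ‖D‖ := by
            have := abs_trW_le W D
            rwa [hGr W hW] at this
          have hbound : (p : ℝ) * ‖D‖ < (p : ℝ) * t :=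
            mul_lt_mul_of_pos_left hd (by exact_mod_cast hp)
          have hA0 : 0 ≤ trW W (A : V →L[ℝ] V) := hA W hW
          rw [hCeq, trW_add, trW_add, trW_smul, trW_one, hGr W hW]
          have h1 : -((p : ℝ) * ‖D‖) ≤ trW W D := by
            have := neg_abs_le (trW W D); linarith
          linarith
        · exact Metric.isOpen_ball.preimage continuous_subtype_val
        · simp [f, Metric.mem_ball, ht]
      have hne : (𝓝[>] (0 : ℝ)).NeBot := by infer_instance
      have htend : Filter.Tendsto f (𝓝[>] (0 : ℝ)) (𝓝 A) := by
        rw [← hf0]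
        exact (hcont.tendsto 0).mono_left nhdsWithin_le_nhds
      exact mem_closure_of_tendsto htend (Filter.eventually_of_mem self_mem_nhdsWithin
        fun t ht => hmem t ht)
    · calc closure (interior (PG 𝔾)) ⊆ closure (PG 𝔾) := closure_mono interior_subset
        _ = PG 𝔾 := (PG_closed 𝔾).closure_eq
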